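/- Fix i ∈ [t]. A cyclic sequence W = (a_{j_1},b_{j_1},...,a_{j_n},b_{j_n}) with j_n = n is a trading cycle in P_1(G_i) with respect to p_n if and only if the extended sequence W' = (a_{j_1},b_{j_1},...,a_{j_n},b_{j_n}, c^i_1,d^i_1,...,c^i_{⌊log t⌋+1}, d^i_{⌊log t⌋+1}) is a trading cycle in Q_{2i−1} with respect to p. -/

import Mathlib

variable {A : Type*} {I : Type*}

/-- A strict preference profile: `acc a b` means item `b` is acceptable to agent `a`;
`pref a b b'` means agent `a` strictly prefers item `b'` over item `b`.
Preferences form a strict linear order on the acceptable items of each agent. -/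
structure Profile (A : Type*) (I : Type*) where
  acc : A → I → Prop
  pref : A → I → I → Prop
  pref_acc : ∀ a b b', pref a b b' → acc a b ∧ acc a b'
  irrefl : ∀ a b, ¬ pref a b b
  trans : ∀ a b c d, pref a b c → pref a c d → pref a b d
  total : ∀ a b b', acc a b → acc a b' → b ≠ b' → pref a b b' ∨ pref a b' b

/-- `p` is an assignment: each item is allocated to at most one agent
(`none` plays the role of `b∅`). -/
def IsAssignment (p : A → Option I) : Prop :=
  ∀ a a' b, p a = some b → p a' = some b → a = a'

/-- An assignment is legal if every allocated item is acceptable to its owner. -/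
def Legal (P : Profile A I) (p : A → Option I) : Prop :=
  ∀ a b, p a = some b → P.acc a b

/-- Strict comparison of `Option I` values from agent `a`'s point of view,
with `none` (i.e. `b∅`) least preferred. -/
def Profile.better (P : Profile A I) (a : A) (x y : Option I) : Prop :=
  match x, y with
  | none, some b => P.acc a b
  | some b, some b' => P.pref a b b'
  | _, none => False

def Profile.betterEq (P : Profile A I) (a : A) (x y : Option I) : Prop :=
  x = y ∨ P.better a x y

/-- `q` pareto dominates `p`. -/
def Dominates (P : Profile A I) (p q : A → Option I) : Prop :=
  (∀ a, P.betterEq a (p a) (q a)) ∧ ∃ a, P.better a (p a) (q a)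

/-- `p` is pareto optimal: no legal assignment pareto dominates it. -/
def ParetoOptimal (P : Profile A I) (p : A → Option I) : Prop :=
  ¬ ∃ q : A → Option I, IsAssignment q ∧ Legal P q ∧ Dominates P p q

/-- Cyclic successor on `Fin t`. -/
def cycSucc {t : ℕ} (r : Fin t) : Fin t := ⟨((r : ℕ) + 1) % t, Nat.mod_lt _ (by have := r.2; omega)⟩

/-- `σ` lists the agents of a trading cycle with respect to assignment `p`:
the agents are distinct, each is allocated an item, and each agent strictly prefers
the item of the (cyclically) next agent over its own. -/
def IsTradingCycle (pref : A → I → I → Prop) (p : A → Option I) {t : ℕ}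
    (σ : Fin t → A) : Prop :=
  Function.Injective σ ∧
    ∀ r : Fin t, ∃ b b', p (σ r) = some b ∧ p (σ (cycSucc r)) = some b' ∧ pref (σ r) b b'

/-- The assignment admits some trading cycle. -/
def AdmitsCycle (pref : A → I → I → Prop) (p : A → Option I) : Prop :=
  ∃ (t : ℕ) (_ : 0 < t) (σ : Fin t → A), IsTradingCycle pref p σ

/-- Agent `a` admits a self loop: some unallocated item is strictly preferred by `a`
over its own allocation. -/
def AdmitsSelfLoop (P : Profile A I) (p : A → Option I) (a : A) : Prop :=
  ∃ b : I, (∀ a', p a' ≠ some b) ∧ P.better a (p a) (some b)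

/-- The set `K` of agents admits a trading cycle (whose agent set is exactly `K`). -/
def SetAdmitsCycle [DecidableEq A] (pref : A → I → I → Prop) (p : A → Option I)
    (K : Finset A) : Prop :=
  ∃ (t : ℕ) (_ : 0 < t) (σ : Fin t → A),
    IsTradingCycle pref p σ ∧ Finset.image σ Finset.univ = K

/-- `(k,α)`-optimality for a multi-layered instance `P : Fin ℓ → Profile A I`. -/
def KAOptimal [DecidableEq A] {ℓ : ℕ} (P : Fin ℓ → Profile A I) (p : A → Option I)
    (k α : ℕ) : Prop :=
  (2 ≤ k → ∀ K : Finset A, K.card = k →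
      ∃ L : Finset (Fin ℓ), L.card = α ∧ ∀ j ∈ L, ¬ SetAdmitsCycle (P j).pref p K) ∧
  (k = 1 → ∀ a : A, ∃ L : Finset (Fin ℓ), L.card = α ∧ ∀ j ∈ L, ¬ AdmitsSelfLoop (P j) p a)

/-- `(k,α)`-upper-bounded optimality. -/
def UBOptimal [DecidableEq A] {ℓ : ℕ} (P : Fin ℓ → Profile A I) (p : A → Option I)
    (k α : ℕ) : Prop :=
  (∀ K : Finset A, K.card ≤ k →
      ∃ L : Finset (Fin ℓ), L.card = α ∧ ∀ j ∈ L, ¬ SetAdmitsCycle (P j).pref p K) ∧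
  (∀ a : A, ∃ L : Finset (Fin ℓ), L.card = α ∧ ∀ j ∈ L, ¬ AdmitsSelfLoop (P j) p a)

/-- `(k,α)`-subset optimality. -/
def SubsetOptimal [DecidableEq A] {ℓ : ℕ} (P : Fin ℓ → Profile A I) (p : A → Option I)
    (k α : ℕ) : Prop :=
  (∀ K : Finset A, K.card = k →
      ∃ L : Finset (Fin ℓ), L.card = α ∧
        ∀ j ∈ L, ∀ K' : Finset A, K ⊆ K' → ¬ SetAdmitsCycle (P j).pref p K') ∧
  (k = 1 → ∀ a : A, ∃ L : Finset (Fin ℓ), L.card = α ∧ ∀ j ∈ L, ¬ AdmitsSelfLoop (P j) p a)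

/-- `(k,α)`-subset* optimality: the subset condition for all nonempty subsets of size
at most `k`, and the self-loop condition for every value of `k`. -/
def SubsetStarOptimal [DecidableEq A] {ℓ : ℕ} (P : Fin ℓ → Profile A I) (p : A → Option I)
    (k α : ℕ) : Prop :=
  (∀ K : Finset A, K.Nonempty → K.card ≤ k →
      ∃ L : Finset (Fin ℓ), L.card = α ∧
        ∀ j ∈ L, ∀ K' : Finset A, K ⊆ K' → ¬ SetAdmitsCycle (P j).pref p K') ∧
  (∀ a : A, ∃ L : Finset (Fin ℓ), L.card = α ∧ ∀ j ∈ L, ¬ AdmitsSelfLoop (P j) p a)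

/-- `ℓ`-global optimality: pareto optimal (no trading cycle, no self loop) in every layer. -/
def GloballyOptimal {ℓ : ℕ} (P : Fin ℓ → Profile A I) (p : A → Option I) : Prop :=
  ∀ j : Fin ℓ, ¬ AdmitsCycle (P j).pref p ∧ ∀ a : A, ¬ AdmitsSelfLoop (P j) p a

/-- The trading graph of `(A, I, P, p)` on vertex set `A ⊕ I`. -/
def TGraph (P : Profile A I) (p : A → Option I) : (A ⊕ I) → (A ⊕ I) → Prop :=
  fun x y =>
    match x, y with
    | Sum.inr b, Sum.inl a => p a = some b ∨ ((∀ a', p a' ≠ some b) ∧ P.acc a b)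
    | Sum.inl a, Sum.inr b => (∃ b₀, p a = some b₀ ∧ P.pref a b₀ b) ∨ (p a = none ∧ P.acc a b)
    | Sum.inl _, Sum.inl _ => False
    | Sum.inr _, Sum.inr _ => False

/-- The restriction of `p` to the reduced instance (agents allocated an item,
items allocated to some agent). -/
def redAssign (p : A → Option I) (a : {a : A // p a ≠ none}) :
    Option {b : I // ∃ a', p a' = some b} :=
  match h : p a.1 with
  | none => none
  | some b => some ⟨b, a.1, h⟩

/-- The identity assignment `p_n (a_i) = b_i` on `n` agents/items. -/
def pn (n : ℕ) : Fin n → Option (Fin n) := fun i => some i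

/-- The profile `P₁(G)`: agent `a_i` prefers exactly the items
`{b_j : (v_i , v_j) ∈ E}` over its own item `b_i`. -/
def P1pref {n : ℕ} (E : Fin n → Fin n → Prop) : Fin n → Fin n → Fin n → Prop :=
  fun i b b' => b = i ∧ E i b'

/-- The profile `P₂(n)`: agent `a_i` prefers only `b_{i+1}` (cyclically) over `b_i`. -/
def P2pref (n : ℕ) : Fin n → Fin n → Fin n → Prop :=
  fun i b b' => b = i ∧ b' = cycSucc i

/-- `colorEnum u w j` is `s_{j+1}`, the `(j+1)`-st smallest color of `[k̃] \ {u,w}`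
(0-indexed `j`). -/
def colorEnum {kt : ℕ} (u w : Fin kt) (j : ℕ) : Fin kt :=
  (((Finset.univ : Finset (Fin kt)) \ {u, w}).sort (· ≤ ·)).getD j u

/-- The layer `P^{MCIS}_{{u,w}}` of the multicolored-independent-set reduction,
recorded via the comparisons with the agents' own items. -/
def MCISpref {n kt : ℕ} (E : Fin n → Fin n → Prop) (c : Fin n → Fin kt)
    (u w : Fin kt) : Fin n → Fin n → Fin n → Prop :=
  fun r b b' => b = r ∧
    ((∃ j : ℕ, j + 1 < kt - 2 ∧ c r = colorEnum u w j ∧ c b' = colorEnum u w (j + 1)) ∨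
      (0 < kt - 2 ∧ c r = colorEnum u w (kt - 3) ∧ c b' = u) ∨
      (c r = u ∧ c b' = w ∧ ¬ E r b') ∨
      (0 < kt - 2 ∧ c r = w ∧ c b' = colorEnum u w 0))

/-- Agents (and, identified with them, items) of the cross-composition for
`Verify-UOA`: `Sum.inl r` is `a_r`; `Sum.inr (j, true)` is `c_j`; `Sum.inr (j, false)`
is `c̄_j`. Each agent owns "its" item. -/
abbrev AgQ (n s : ℕ) := Fin n ⊕ (Fin s × Bool)

/-- The assignment matching each agent with its own item. -/
def pQ (n s : ℕ) : AgQ n s → Option (AgQ n s) := fun a => some a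

/-- The profile `Q_{2i-1}` (extending `P₁(G_i)`), recorded via comparisons
with the agents' own items.  `i.testBit j` is the `j`-th bit of `i`. -/
def Q1pref (n s : ℕ) (E : Fin n → Fin n → Prop) (i : ℕ) :
    AgQ n s → AgQ n s → AgQ n s → Prop :=
  fun a b b' => b = a ∧
    match a, b' with
    | Sum.inl r, Sum.inl r' => (r : ℕ) + 1 < n ∧ E r r'
    | Sum.inl r, Sum.inr (j, bb) => (r : ℕ) = n - 1 ∧ (j : ℕ) = 0 ∧ bb = i.testBit 0
    | Sum.inr (j, bb), Sum.inr (j', bb') =>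
        bb = i.testBit (j : ℕ) ∧ (j' : ℕ) = (j : ℕ) + 1 ∧ bb' = i.testBit (j' : ℕ)
    | Sum.inr (j, bb), Sum.inl r' =>
        bb = i.testBit (j : ℕ) ∧ (j : ℕ) = s - 1 ∧ ∃ rn : Fin n, (rn : ℕ) = n - 1 ∧ E rn r'

/-- The profile `Q_{2i}` (extending `P₂(n)`), recorded via comparisons
with the agents' own items. -/
def Q2pref (n s : ℕ) (i : ℕ) : AgQ n s → AgQ n s → AgQ n s → Prop :=
  fun a b b' => b = a ∧
    match a, b' with
    | Sum.inl r, Sum.inl r' => (r' : ℕ) = (r : ℕ) + 1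
    | Sum.inl r, Sum.inr (j, bb) => (r : ℕ) = n - 1 ∧ (j : ℕ) = 0 ∧ bb = i.testBit 0
    | Sum.inr (j, bb), Sum.inr (j', bb') =>
        bb = i.testBit (j : ℕ) ∧ (j' : ℕ) = (j : ℕ) + 1 ∧ bb' = i.testBit (j' : ℕ)
    | Sum.inr (j, bb), Sum.inl r' =>
        bb = i.testBit (j : ℕ) ∧ (j : ℕ) = s - 1 ∧ (r' : ℕ) = 0

/-- A list of agents forming a trading cycle with respect to `p`. -/
def IsTCList (pref : A → I → I → Prop) (p : A → Option I) (L : List A) : Prop :=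
  L ≠ [] ∧ L.Nodup ∧
    ∀ r : Fin L.length, ∃ b b',
      p (L.get r) = some b ∧ p (L.get (cycSucc r)) = some b' ∧ pref (L.get r) b b'


set_option maxHeartbeats 1600000 in
/-- a cyclic sequence `W` over all `n` base agents ending at `a_n` is a
trading cycle in `P₁(G_i)` with respect to `p_n` iff the extended sequence `W'` obtained
by appending the chain `c^i_1,…,c^i_{⌊log t⌋+1}` is a trading cycle in `Q_{2i-1}` with
respect to `p`. -/
theorem statement17 (n t i : ℕ) (hn : 0 < n) (hi1 : 1 ≤ i) (hi2 : i ≤ t)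
    (E : Fin n → Fin n → Prop) (σ : Fin n → Fin n)
    (hlast : σ ⟨n - 1, by omega⟩ = ⟨n - 1, by omega⟩) :
    IsTradingCycle (P1pref E) (pn n) σ ↔
      IsTradingCycle (Q1pref n (Nat.log 2 t + 1) E i) (pQ n (Nat.log 2 t + 1))
        (fun r : Fin (n + (Nat.log 2 t + 1)) =>
          if h : (r : ℕ) < n then Sum.inl (σ ⟨(r : ℕ), h⟩)
          else Sum.inr (⟨(r : ℕ) - n, by omega⟩, i.testBit ((r : ℕ) - n))) := by
  set s := Nat.log 2 t + 1 with hsdef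
  have hs1 : 1 ≤ s := Nat.le_add_left 1 _
  have hcs : ∀ {m : ℕ} (v : ℕ) (hv : v < m) (h2 : (v + 1) % m < m),
      cycSucc (⟨v, hv⟩ : Fin m) = ⟨(v + 1) % m, h2⟩ := fun _ _ _ => rfl
  constructor
  · rintro ⟨hinj, hcyc⟩
    -- extract edge facts
    have hE : ∀ r : Fin n, E (σ r) (σ (cycSucc r)) := by
      intro r
      obtain ⟨b, b', hb, hb', hp⟩ := hcyc r
      simp only [pn, Option.some.injEq] at hb hb'
      subst hb; subst hb'
      exact hp.2
    have hE1 : ∀ (v : ℕ) (h1 : v + 1 < n), E (σ ⟨v, by omega⟩) (σ ⟨v + 1, h1⟩) := by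
      intro v h1
      have h2 := hE ⟨v, by omega⟩
      have h3 : cycSucc (⟨v, by omega⟩ : Fin n) = ⟨v + 1, h1⟩ := by
        rw [hcs v (by omega) (Nat.mod_lt _ (by omega))]
        exact Fin.ext (by simpa using Nat.mod_eq_of_lt h1)
      rwa [h3] at h2
    have hE2 : E ⟨n - 1, by omega⟩ (σ ⟨0, hn⟩) := by
      have h2 := hE ⟨n - 1, by omega⟩
      have h3 : cycSucc (⟨n - 1, by omega⟩ : Fin n) = ⟨0, hn⟩ := by
        rw [hcs (n - 1) (by omega) (Nat.mod_lt _ (by omega))]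
        refine Fin.ext ?_
        have : n - 1 + 1 = n := by omega
        simp [this, Nat.mod_self]
      rw [h3, hlast] at h2
      exact h2
    have hσlt : ∀ (v : ℕ) (h1 : v + 1 < n), ((σ ⟨v, by omega⟩ : Fin n) : ℕ) + 1 < n := by
      intro v h1
      have hlt : ((σ ⟨v, by omega⟩ : Fin n) : ℕ) < n := (σ ⟨v, by omega⟩).2
      rcases Nat.lt_or_ge (((σ ⟨v, by omega⟩ : Fin n) : ℕ) + 1) n with h | h
      · exact h
      · exfalso
        have heq : σ (⟨v, by omega⟩ : Fin n) = ⟨n - 1, by omega⟩ := Fin.ext (by simp; omega)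
        have := hinj (heq.trans hlast.symm)
        have := congrArg Fin.val this
        simp at this
        omega
    refine ⟨?_, ?_⟩
    · intro r r' h
      dsimp only at h
      by_cases h1 : (r : ℕ) < n <;> by_cases h2 : (r' : ℕ) < n
      · rw [dif_pos h1, dif_pos h2] at h
        have h3 := hinj (Sum.inl.inj h)
        have h4 := congrArg Fin.val h3
        simp at h4
        exact Fin.ext h4
      · rw [dif_pos h1, dif_neg h2] at h
        exact absurd h (by simp)
      · rw [dif_neg h1, dif_pos h2] at h
        exact absurd h (by simp)
      · rw [dif_neg h1, dif_neg h2] at h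
        rw [Sum.inr.injEq, Prod.mk.injEq, Fin.mk.injEq] at h
        have h5 := h.1
        exact Fin.ext (by omega)
    · intro r
      obtain ⟨v, hv⟩ := r
      refine ⟨_, _, rfl, rfl, rfl, ?_⟩
      by_cases h1 : v + 1 < n
      · rw [hcs v hv (Nat.mod_lt _ (by omega))]
        have hm : (v + 1) % (n + s) = v + 1 := Nat.mod_eq_of_lt (by omega)
        dsimp only
        rw [dif_pos (show v < n by omega)]
        simp only [← hsdef, hm]
        rw [dif_pos (show v + 1 < n from h1)]
        exact ⟨hσlt v h1, hE1 v h1⟩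
      · by_cases h2 : v < n
        · -- v = n - 1, successor is first chain agent
          have hveq : v = n - 1 := by omega
          rw [hcs v hv (Nat.mod_lt _ (by omega))]
          have hm : (v + 1) % (n + s) = n := by
            rw [show v + 1 = n by omega]
            exact Nat.mod_eq_of_lt (by omega)
          dsimp only
          rw [dif_pos h2]
          simp only [← hsdef, hm]
          rw [dif_neg (show ¬ n < n by omega)]
          simp only [Nat.sub_self]
          have hσv : σ ⟨v, h2⟩ = ⟨n - 1, by omega⟩ := by
            have : (⟨v, h2⟩ : Fin n) = ⟨n - 1, by omega⟩ := Fin.ext (by simp; omega)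
            rw [this]; exact hlast
          refine ⟨?_, by trivial, by trivial⟩
          rw [hσv]
        · -- chain agent
          by_cases h3 : v + 1 < n + s
          · rw [hcs v hv (Nat.mod_lt _ (by omega))]
            have hm : (v + 1) % (n + s) = v + 1 := Nat.mod_eq_of_lt h3
            dsimp only
            rw [dif_neg h2]
            simp only [← hsdef, hm]
            rw [dif_neg (show ¬ v + 1 < n by omega)]
            exact ⟨rfl, show v + 1 - n = v - n + 1 by omega, rfl⟩
          · -- last chain agent, successor is σ 0
            have hveq : v = n + s - 1 := by omega
            rw [hcs v hv (Nat.mod_lt _ (by omega))]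
            have hm : (v + 1) % (n + s) = 0 := by
              rw [show v + 1 = n + s by omega]
              exact Nat.mod_self _
            dsimp only
            rw [dif_neg h2]
            simp only [← hsdef, hm]
            rw [dif_pos (show 0 < n from hn)]
            exact ⟨rfl, show v - n = s - 1 by omega, ⟨n - 1, by omega⟩, rfl, hE2⟩
  · rintro ⟨hinj, hcyc⟩
    have hQ : ∀ (v : ℕ) (hv : v < n + s) (h2 : (v + 1) % (n + s) < n + s),
        Q1pref n s E i
          ((fun r : Fin (n + s) =>
            if h : (r : ℕ) < n then Sum.inl (σ ⟨(r : ℕ), h⟩)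
            else Sum.inr (⟨(r : ℕ) - n, by omega⟩, i.testBit ((r : ℕ) - n))) ⟨v, hv⟩)
          ((fun r : Fin (n + s) =>
            if h : (r : ℕ) < n then Sum.inl (σ ⟨(r : ℕ), h⟩)
            else Sum.inr (⟨(r : ℕ) - n, by omega⟩, i.testBit ((r : ℕ) - n))) ⟨v, hv⟩)
          ((fun r : Fin (n + s) =>
            if h : (r : ℕ) < n then Sum.inl (σ ⟨(r : ℕ), h⟩)
            else Sum.inr (⟨(r : ℕ) - n, by omega⟩, i.testBit ((r : ℕ) - n)))
            ⟨(v + 1) % (n + s), h2⟩) := by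
      intro v hv h2
      obtain ⟨b, b', hb, hb', hp⟩ := hcyc ⟨v, hv⟩
      simp only [pQ, Option.some.injEq] at hb hb'
      subst hb
      subst hb'
      exact hp
    refine ⟨?_, ?_⟩
    · intro r r' h
      have h4 : (⟨(r : ℕ), by omega⟩ : Fin (n + s)) = ⟨(r' : ℕ), by omega⟩ := by
        apply hinj
        dsimp only
        rw [dif_pos r.2, dif_pos r'.2]
        simp only [Fin.eta]
        rw [h]
      have := congrArg Fin.val h4
      simp at this
      exact Fin.ext this
    · intro r
      obtain ⟨v, hv⟩ := r
      refine ⟨_, _, rfl, rfl, rfl, ?_⟩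
      by_cases h1 : v + 1 < n
      · have hm : (v + 1) % (n + s) = v + 1 := Nat.mod_eq_of_lt (by omega)
        have hq := hQ v (by omega) (Nat.mod_lt _ (by omega))
        simp only [hm] at hq
        rw [dif_pos (show v < n by omega), dif_pos (show v + 1 < n from h1)] at hq
        rw [hcs v hv (Nat.mod_lt _ (by omega))]
        have heq : (⟨(v + 1) % n, Nat.mod_lt _ (by omega)⟩ : Fin n) = ⟨v + 1, h1⟩ :=
          Fin.ext (by simpa using Nat.mod_eq_of_lt h1)
        rw [heq]
        exact hq.2.2
      · -- v = n - 1 : use the last chain agent's preference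
        have hveq : v = n - 1 := by omega
        have hm : (n + s - 1 + 1) % (n + s) = 0 := by
          rw [show n + s - 1 + 1 = n + s by omega]
          exact Nat.mod_self _
        have hq := hQ (n + s - 1) (by omega) (Nat.mod_lt _ (by omega))
        simp only [hm] at hq
        rw [dif_neg (show ¬ n + s - 1 < n by omega), dif_pos (show 0 < n from hn)] at hq
        obtain ⟨-, -, -, rn, hrn, hrnE⟩ := hq
        have hrn' : rn = ⟨n - 1, by omega⟩ := Fin.ext (by simpa using hrn)
        rw [hrn'] at hrnE
        rw [hcs v hv (Nat.mod_lt _ (by omega))]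
        have hm2 : (v + 1) % n = 0 := by
          rw [show v + 1 = n by omega]
          exact Nat.mod_self _
        have heq : (⟨(v + 1) % n, Nat.mod_lt _ (by omega)⟩ : Fin n) = ⟨0, hn⟩ := Fin.ext (by simpa using hm2)
        rw [heq]
        have hveq2 : (⟨v, hv⟩ : Fin n) = ⟨n - 1, by omega⟩ := Fin.ext (by simp; omega)
        rw [hveq2, hlast]
        exact hrnE
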